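/- arXiv:1903.01832 — 7 statements merged into one kernel-verified Lean document; each statement's English description precedes it below -/
import Mathlib

section
/- Let Π be an equitable partition, with n cells all of the same size |X|/n, of a d-class association scheme on a finite set X with intersection numbers p_{ij}^k, and let M_i denote the quotient matrices. Let p be a prime and q = p^m for a positive integer m. If for a fixed i ∈ {1,...,d} the prime p divides p_{ii}^k for every k ∈ {0,1,...,d}, then the F_q-span of the rows of the image of M_i in the n × n matrices over F_q (reducing entries modulo p and embedding F_p into F_q) is a self-orthogonal linear code of length n over F_q; equivalently, M_i · M_iᵀ = 0 over F_q. -/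
open Matrix Finset

/-- If an equitable partition of a `d`-class association scheme has `n`
cells all of the same size `|X| / n`, `p` is a prime dividing `p i i k` for all `k`
(for a fixed `i ∈ {1, …, d}`), then the rows of `M i`, reduced mod `p` and viewed over
`F_q` with `q = p ^ m`, span a self-orthogonal code of length `n`; equivalently
`M i * (M i)ᵀ = 0` over `F_q`. -/
theorem quotient_matrix_spans_self_orthogonal_code
    {X : Type*} [Fintype X] [DecidableEq X] (d n : ℕ)
    (p m : ℕ) [Fact p.Prime] (hm : 0 < m)
    (A : Fin (d + 1) → Matrix X X ℤ)
    (pnum : Fin (d + 1) → Fin (d + 1) → Fin (d + 1) → ℕ)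
    (hsymm : ∀ i, (A i)ᵀ = A i)
    (h01 : ∀ i u v, A i u v = 0 ∨ A i u v = 1)
    (hA0 : A 0 = 1)
    (hsum : ∑ i, A i = Matrix.of fun _ _ => (1 : ℤ))
    (hmul : ∀ i j, A i * A j = ∑ k, (pnum i j k : ℤ) • A k)
    -- the partition into `n` nonempty cells, all of size `|X| / n`
    (c : X → Fin n) (hc : Function.Surjective c)
    (hsize : ∀ j, (Finset.univ.filter fun x => c x = j).card = Fintype.card X / n)
    -- the partition is equitable, with quotient matrices `M i`
    (M : Fin (d + 1) → Matrix (Fin n) (Fin n) ℤ)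
    (hM : ∀ i, A i * (Matrix.of fun x j => if c x = j then (1 : ℤ) else 0)
        = (Matrix.of fun x j => if c x = j then (1 : ℤ) else 0) * M i)
    (i : Fin (d + 1)) (hi : i ≠ 0)
    (hdiv : ∀ k, p ∣ pnum i i k) :
    (∀ u ∈ Submodule.span (GaloisField p m)
        (Set.range fun r => ((M i).map (Int.cast : ℤ → GaloisField p m)) r),
     ∀ v ∈ Submodule.span (GaloisField p m)
        (Set.range fun r => ((M i).map (Int.cast : ℤ → GaloisField p m)) r),
       u ⬝ᵥ v = 0)
    ∧ ((M i).map (Int.cast : ℤ → GaloisField p m))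
        * ((M i).map (Int.cast : ℤ → GaloisField p m))ᵀ = 0 := by
  classical
  set F := GaloisField p m
  set H : Matrix X (Fin n) ℤ := Matrix.of fun x j => if c x = j then (1 : ℤ) else 0 with hH
  -- entry formulas
  have hHmul : ∀ (N : Matrix (Fin n) (Fin n) ℤ) (x : X) (j : Fin n),
      (H * N) x j = N (c x) j := by
    intro N x j
    simp [hH, Matrix.mul_apply, ite_mul, Finset.sum_ite_eq]
  -- injectivity of left multiplication by H
  have hHinj : ∀ (N N' : Matrix (Fin n) (Fin n) ℤ), H * N = H * N' → N = N' := by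
    intro N N' h
    ext j k
    obtain ⟨x, rfl⟩ := hc j
    have := congrFun (congrFun h x) k
    rwa [hHmul, hHmul] at this
  -- size positivity
  have hs : 0 < Fintype.card X / n ∨ n = 0 := by
    rcases Nat.eq_zero_or_pos n with h | h
    · exact Or.inr h
    · left
      obtain ⟨x, hx⟩ := hc ⟨0, h⟩
      rw [← hsize ⟨0, h⟩]
      exact Finset.card_pos.mpr ⟨x, by simp [hx]⟩
  -- symmetry of M i over ℤ (when n > 0)
  have hMsymm : (M i)ᵀ = M i := by
    rcases hs with hs | hs
    · have key : ∀ j k : Fin n, (Hᵀ * (A i * H)) j k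
          = (Fintype.card X / n : ℤ) * (M i) j k := by
        intro j k
        rw [hM i]
        calc (Hᵀ * (H * M i)) j k
            = ∑ x : X, (if c x = j then (1:ℤ) else 0) * (H * M i) x k := by
              simp [Matrix.mul_apply, hH]
          _ = ∑ x : X, (if c x = j then (M i) j k else 0) := by
              apply Finset.sum_congr rfl
              intro x _
              rw [hHmul]
              by_cases hx : c x = j <;> simp [hx]
          _ = ((Finset.univ.filter fun x => c x = j).card : ℤ) * (M i) j k := by
              rw [Finset.sum_ite, Finset.sum_const_zero, add_zero, Finset.sum_const,
                nsmul_eq_mul]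
          _ = (((Fintype.card X / n : ℕ)) : ℤ) * (M i) j k := by rw [hsize]
      have hsymAH : (Hᵀ * (A i * H))ᵀ = Hᵀ * (A i * H) := by
        rw [Matrix.transpose_mul, Matrix.transpose_mul, Matrix.transpose_transpose,
          hsymm i, Matrix.mul_assoc]
      ext j k
      have h1 := congrFun (congrFun hsymAH j) k
      rw [Matrix.transpose_apply, key, key] at h1
      have hne : (((Fintype.card X / n : ℕ)) : ℤ) ≠ 0 := by exact_mod_cast hs.ne'
      have := mul_left_cancel₀ hne h1
      simpa [Matrix.transpose_apply] using this
    · subst hs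
      ext j k
      exact j.elim0
  -- M i * M i = ∑ pnum • M k over ℤ
  have hMM : M i * M i = ∑ k, (pnum i i k : ℤ) • M k := by
    apply hHinj
    have : H * (M i * M i) = A i * A i * H := by
      rw [← Matrix.mul_assoc, ← hM i, Matrix.mul_assoc, ← hM i, ← Matrix.mul_assoc]
    rw [this, hmul, Matrix.sum_mul, Matrix.mul_sum]
    apply Finset.sum_congr rfl
    intro k _
    rw [Matrix.smul_mul, Matrix.mul_smul, hM k]
  -- the mod-p reduction
  have hcast : ∀ k, ((pnum i i k : ℕ) : F) = 0 := fun k =>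
    (CharP.cast_eq_zero_iff F p _).mpr (hdiv k)
  have hzero : ((M i).map (Int.cast : ℤ → F))
      * ((M i).map (Int.cast : ℤ → F))ᵀ = 0 := by
    have hmap : ((M i).map (Int.cast : ℤ → F))ᵀ = (M i).map (Int.cast : ℤ → F) := by
      rw [← Matrix.transpose_map, hMsymm]
    have hmm : (M i).map (Int.cast : ℤ → F) * (M i).map (Int.cast : ℤ → F)
        = (M i * M i).map (Int.cast : ℤ → F) := by
      exact (Matrix.map_mul (f := Int.castRingHom F)).symm
    rw [hmap, hmm, hMM]
    ext j k
    simp only [Matrix.map_apply, Matrix.sum_apply, Matrix.zero_apply,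
      Matrix.smul_apply, smul_eq_mul]
    rw [Int.cast_sum]
    exact Finset.sum_eq_zero fun x _ => by rw [Int.cast_mul, Int.cast_natCast, hcast, zero_mul]
  refine ⟨?_, hzero⟩
  -- self-orthogonality of the span
  have key : ∀ r s : Fin n,
      ((M i).map (Int.cast : ℤ → F)) r ⬝ᵥ ((M i).map (Int.cast : ℤ → F)) s = 0 := by
    intro r s
    have := congrFun (congrFun hzero r) s
    simpa [Matrix.mul_apply, dotProduct] using this
  intro u hu v hv
  induction hu using Submodule.span_induction with
  | mem u hu =>
    obtain ⟨r, rfl⟩ := hu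
    induction hv using Submodule.span_induction with
    | mem v hv => obtain ⟨s, rfl⟩ := hv; exact key r s
    | zero => simp
    | add x y _ _ hx hy => rw [dotProduct_add, hx, hy, add_zero]
    | smul a x _ hx => rw [dotProduct_smul, hx, smul_zero]
  | zero => simp
  | add x y _ _ hx hy => rw [add_dotProduct, hx, hy, add_zero]
  | smul a x _ hx => rw [smul_dotProduct, hx, smul_zero]
end

section
/- Let Π be an equitable partition, with n cells all of the same size |X|/n, of a d-class association scheme on a finite set X with intersection numbers p_{ij}^k, and let M_i denote the quotient matrices. Let m ≥ 2 be a positive integer. If for a fixed i ∈ {1,...,d} the integer m divides p_{ii}^k for every k ∈ {0,1,...,d}, then the ℤ/mℤ-submodule of (ℤ/mℤ)^n spanned by the rows of the image of M_i modulo m is self-orthogonal: the standard inner product of any two elements of this submodule is 0 in ℤ/mℤ; equivalently, M_i · M_iᵀ = 0 over ℤ/mℤ. -/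
open Matrix Finset

/-- If `N * Nᵀ = 0`, then the row span of `N` is self-orthogonal. -/
lemma rowSpan_selfOrth {R : Type*} [CommRing R] {n : ℕ}
    (N : Matrix (Fin n) (Fin n) R) (h : N * Nᵀ = 0) :
    ∀ u ∈ Submodule.span R (Set.range fun r => N r),
    ∀ v ∈ Submodule.span R (Set.range fun r => N r), u ⬝ᵥ v = 0 := by
  have hrow : ∀ r r' : Fin n, N r ⬝ᵥ N r' = 0 := by
    intro r r'
    have := congrFun (congrFun h r) r'
    simpa [Matrix.mul_apply, dotProduct, Matrix.transpose_apply] using this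
  intro u hu v hv
  induction hu using Submodule.span_induction with
  | mem x hx =>
    obtain ⟨r, rfl⟩ := hx
    induction hv using Submodule.span_induction with
    | mem y hy => obtain ⟨r', rfl⟩ := hy; exact hrow r r'
    | zero => simp
    | add y z _ _ hy hz => simp [dotProduct_add, hy, hz]
    | smul a y _ hy => simp [dotProduct_smul, hy]
  | zero => simp
  | add y z _ _ hy hz => simp [add_dotProduct, hy, hz]
  | smul a y _ hy => simp [smul_dotProduct, hy]

/-- If an equitable partition of a `d`-class association scheme has `n`
cells all of the same size `|X| / n`, and `m ≥ 2` divides `p i i k` for all `k`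
(for a fixed `i ∈ {1, …, d}`), then the rows of `M i`, reduced mod `m`, span a
self-orthogonal code of length `n` over `ℤ/mℤ`; equivalently `M i * (M i)ᵀ = 0`
over `ℤ/mℤ`. -/
theorem quotient_matrix_spans_self_orthogonal_code_over_zmod
    {X : Type*} [Fintype X] [DecidableEq X] (d n : ℕ)
    (m : ℕ) (hm : 2 ≤ m)
    (A : Fin (d + 1) → Matrix X X ℤ)
    (pnum : Fin (d + 1) → Fin (d + 1) → Fin (d + 1) → ℕ)
    (hsymm : ∀ i, (A i)ᵀ = A i)
    (h01 : ∀ i u v, A i u v = 0 ∨ A i u v = 1)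
    (hA0 : A 0 = 1)
    (hsum : ∑ i, A i = Matrix.of fun _ _ => (1 : ℤ))
    (hmul : ∀ i j, A i * A j = ∑ k, (pnum i j k : ℤ) • A k)
    -- the partition into `n` nonempty cells, all of size `|X| / n`
    (c : X → Fin n) (hc : Function.Surjective c)
    (hsize : ∀ j, (Finset.univ.filter fun x => c x = j).card = Fintype.card X / n)
    -- the partition is equitable, with quotient matrices `M i`
    (M : Fin (d + 1) → Matrix (Fin n) (Fin n) ℤ)
    (hM : ∀ i, A i * (Matrix.of fun x j => if c x = j then (1 : ℤ) else 0)
        = (Matrix.of fun x j => if c x = j then (1 : ℤ) else 0) * M i)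
    (i : Fin (d + 1)) (hi : i ≠ 0)
    (hdiv : ∀ k, m ∣ pnum i i k) :
    (∀ u ∈ Submodule.span (ZMod m)
        (Set.range fun r => ((M i).map (Int.cast : ℤ → ZMod m)) r),
     ∀ v ∈ Submodule.span (ZMod m)
        (Set.range fun r => ((M i).map (Int.cast : ℤ → ZMod m)) r),
       u ⬝ᵥ v = 0)
    ∧ ((M i).map (Int.cast : ℤ → ZMod m))
        * ((M i).map (Int.cast : ℤ → ZMod m))ᵀ = 0 := by
  suffices h0 : ((M i).map (Int.cast : ℤ → ZMod m))
      * ((M i).map (Int.cast : ℤ → ZMod m))ᵀ = 0 by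
    exact ⟨rowSpan_selfOrth _ h0, h0⟩
  rcases Nat.eq_zero_or_pos n with hn | hn
  · subst hn
    ext j k
    exact j.elim0
  -- notation
  set H : Matrix X (Fin n) ℤ := Matrix.of fun x j => if c x = j then (1 : ℤ) else 0 with hH
  set s : ℕ := Fintype.card X / n with hsdef
  -- the constant s is positive
  have hs : (s : ℤ) ≠ 0 := by
    obtain ⟨x, hx⟩ := hc ⟨0, hn⟩
    have hpos : 0 < (Finset.univ.filter fun y => c y = ⟨0, hn⟩).card :=
      Finset.card_pos.mpr ⟨x, by simp [hx]⟩
    rw [hsize] at hpos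
    exact_mod_cast hpos.ne'
  -- Hᵀ * H = s • 1
  have hHH : Hᵀ * H = (s : ℤ) • (1 : Matrix (Fin n) (Fin n) ℤ) := by
    ext j k
    simp only [Matrix.mul_apply, Matrix.transpose_apply, hH, Matrix.of_apply,
      Matrix.smul_apply, Matrix.one_apply, smul_eq_mul, ite_mul, one_mul, zero_mul,
      mul_ite, mul_one, mul_zero]
    by_cases hjk : j = k
    · subst hjk
      rw [if_pos rfl]
      have hcong : ∀ x : X, (if c x = j then (if c x = j then (1:ℤ) else 0) else 0)
          = if c x = j then (1:ℤ) else 0 := fun x => by split_ifs <;> rfl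
      rw [Finset.sum_congr rfl fun x _ => hcong x, Finset.sum_boole, hsize j]
    · rw [if_neg hjk]
      refine Finset.sum_eq_zero fun x _ => ?_
      split_ifs with h1 h2
      · exact absurd (h1.symm.trans h2).symm hjk
      all_goals rfl
  -- Hᵀ * A i' * H = s • M i'
  have hE : ∀ i', Hᵀ * A i' * H = (s : ℤ) • M i' := by
    intro i'
    rw [Matrix.mul_assoc, hM i', ← Matrix.mul_assoc, hHH, Matrix.smul_mul, Matrix.one_mul]
  -- M i is symmetric
  have hMt : (M i)ᵀ = M i := by
    have h1 : ((s : ℤ) • M i)ᵀ = (s : ℤ) • M i := by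
      rw [← hE i, Matrix.transpose_mul, Matrix.transpose_mul, Matrix.transpose_transpose,
        hsymm i, Matrix.mul_assoc]
    rw [Matrix.transpose_smul] at h1
    ext j k
    have h2 := congrFun (congrFun h1 j) k
    simp only [Matrix.smul_apply, smul_eq_mul] at h2
    exact mul_left_cancel₀ hs (by simpa [Matrix.transpose_apply] using h2)
  -- M i * M i = ∑ k, pnum i i k • M k
  have hMsq : M i * M i = ∑ k, (pnum i i k : ℤ) • M k := by
    have h1 : (s : ℤ) • (M i * M i) = (s : ℤ) • ∑ k, (pnum i i k : ℤ) • M k := by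
      have lhs : Hᵀ * (A i * A i) * H = (s : ℤ) • (M i * M i) := by
        calc Hᵀ * (A i * A i) * H = (Hᵀ * A i) * (A i * H) := by
              simp only [Matrix.mul_assoc]
          _ = (Hᵀ * A i) * (H * M i) := by rw [hM i]
          _ = (Hᵀ * A i * H) * M i := by simp only [Matrix.mul_assoc]
          _ = ((s : ℤ) • M i) * M i := by rw [hE i]
          _ = (s : ℤ) • (M i * M i) := by rw [Matrix.smul_mul]
      have rhs : Hᵀ * (A i * A i) * H = (s : ℤ) • ∑ k, (pnum i i k : ℤ) • M k := by
        rw [hmul i i, Matrix.mul_sum, Matrix.sum_mul, Finset.smul_sum]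
        refine Finset.sum_congr rfl fun k _ => ?_
        rw [Matrix.mul_smul, Matrix.smul_mul, hE k, smul_comm]
      rw [← lhs, rhs]
    ext j k
    have h2 := congrFun (congrFun h1 j) k
    simp only [Matrix.smul_apply, smul_eq_mul] at h2
    exact mul_left_cancel₀ hs h2
  -- conclude over ZMod m
  ext j k
  simp only [Matrix.mul_apply, Matrix.map_apply, Matrix.transpose_apply, Matrix.zero_apply]
  have : ∑ l, ((M i) j l : ZMod m) * ((M i) k l : ZMod m)
      = (((M i * M i) j k : ℤ) : ZMod m) := by
    rw [Matrix.mul_apply]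
    push_cast
    refine Finset.sum_congr rfl fun l _ => ?_
    have := congrFun (congrFun hMt l) k
    simp only [Matrix.transpose_apply] at this
    rw [← this]
  rw [this, hMsq]
  simp only [Matrix.sum_apply, Matrix.smul_apply, smul_eq_mul]
  push_cast
  refine Finset.sum_eq_zero fun k' _ => ?_
  have hz : ((pnum i i k' : ℕ) : ZMod m) = 0 := by
    have : NeZero m := ⟨by omega⟩
    exact (ZMod.natCast_eq_zero_iff _ _).mpr (hdiv k')
  rw [hz, zero_mul]
end

section
/- Let Γ be a distance-regular graph with diameter d and intersection numbers p_{ij}^k, let p be a prime and q = p^m, and let G be a group of automorphisms of Γ all of whose vertex orbits have the same size, with n orbits. Let H be the characteristic matrix of the orbit partition and M_i the quotient matrix of the distance-i matrix A_i with respect to this partition (so A_i H = H M_i). If there exists i ∈ {1,...,d} such that p divides p_{ii}^k for all k ∈ {0,1,...,d}, then the F_q-span of the rows of the image of M_i over F_q is a self-orthogonal linear code of length n over F_q; equivalently, M_i · M_iᵀ = 0 over F_q. -/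
open Matrix Finset

/-- Let `Γ` be a distance-regular graph of diameter `d` with intersection
numbers `p i j k`, and let a group `G` of automorphisms act on `Γ` with `n` orbits, all
of the same size.  If `p` is a prime dividing `p i i k` for all `k` (for some
`i ∈ {1, …, d}`), then the rows of the quotient matrix `M i`, viewed over `F_q` with
`q = p ^ m`, span a self-orthogonal code of length `n`; equivalently
`M i * (M i)ᵀ = 0` over `F_q`. -/
theorem drg_quotient_matrix_spans_self_orthogonal_code
    {V : Type*} [Fintype V] [DecidableEq V]
    (G : SimpleGraph V) (hconn : G.Connected)
    (d : ℕ) (hdiam : ∀ u v, G.dist u v ≤ d) (hdiam' : ∃ u v, G.dist u v = d)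
    (pnum : Fin (d + 1) → Fin (d + 1) → Fin (d + 1) → ℕ)
    (hdrg : ∀ i j k : Fin (d + 1), ∀ u v : V, G.dist u v = (k : ℕ) →
      (Finset.univ.filter fun w => G.dist u w = (i : ℕ) ∧ G.dist v w = (j : ℕ)).card
        = pnum i j k)
    (p m n : ℕ) [Fact p.Prime] (hm : 0 < m)
    -- a group of automorphisms of the graph
    (S : Subgroup (Equiv.Perm V))
    (hS : ∀ g ∈ S, ∀ u v : V, G.Adj (g u) (g v) ↔ G.Adj u v)
    -- the orbit partition: `o x` is the index of the orbit of `x`, there are `n` orbits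
    (o : V → Fin n) (ho : Function.Surjective o)
    (horb : ∀ u v : V, o u = o v ↔ ∃ g ∈ S, g u = v)
    -- all orbits have the same size
    (hsize : ∀ j₁ j₂ : Fin n, (Finset.univ.filter fun x => o x = j₁).card
        = (Finset.univ.filter fun x => o x = j₂).card)
    -- the quotient matrices of the distance matrices with respect to the orbit partition
    (M : Fin (d + 1) → Matrix (Fin n) (Fin n) ℤ)
    (hM : ∀ i : Fin (d + 1),
      (Matrix.of fun u v => if G.dist u v = (i : ℕ) then (1 : ℤ) else 0)
          * (Matrix.of fun x j => if o x = j then (1 : ℤ) else 0)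
        = (Matrix.of fun x j => if o x = j then (1 : ℤ) else 0) * M i)
    (i : Fin (d + 1)) (hi : i ≠ 0)
    (hdiv : ∀ k, p ∣ pnum i i k) :
    (∀ u ∈ Submodule.span (GaloisField p m)
        (Set.range fun r => ((M i).map (Int.cast : ℤ → GaloisField p m)) r),
     ∀ v ∈ Submodule.span (GaloisField p m)
        (Set.range fun r => ((M i).map (Int.cast : ℤ → GaloisField p m)) r),
       u ⬝ᵥ v = 0)
    ∧ ((M i).map (Int.cast : ℤ → GaloisField p m))
        * ((M i).map (Int.cast : ℤ → GaloisField p m))ᵀ = 0 := by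
  classical
  set F := GaloisField p m with hF
  let A : Matrix V V ℤ := Matrix.of fun u v => if G.dist u v = (i : ℕ) then (1 : ℤ) else 0
  let H : Matrix V (Fin n) ℤ := Matrix.of fun x j => if o x = j then (1 : ℤ) else 0
  have hMi : A * H = H * M i := hM i
  -- entries of H * N
  have hHmul : ∀ (N : Matrix (Fin n) (Fin n) ℤ) (x : V) (b : Fin n),
      (H * N) x b = N (o x) b := by
    intro N x b
    simp only [Matrix.mul_apply, H, Matrix.of_apply, ite_mul, one_mul, zero_mul]
    simp [Finset.sum_ite_eq]
  -- A is symmetric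
  have hAsymm : Aᵀ = A := by
    ext u v
    simp [A, Matrix.transpose_apply, SimpleGraph.dist_comm]
  -- entries of A * A are intersection numbers
  have hAA : ∀ x z : V, (A * A) x z = (pnum i i ⟨G.dist x z, Nat.lt_succ_of_le (hdiam x z)⟩ : ℤ) := by
    intro x z
    have hcount := hdrg i i ⟨G.dist x z, Nat.lt_succ_of_le (hdiam x z)⟩ x z rfl
    rw [Matrix.mul_apply]
    have : ∀ w : V, A x w * A w z
        = if (G.dist x w = (i : ℕ) ∧ G.dist z w = (i : ℕ)) then (1 : ℤ) else 0 := by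
      intro w
      have hc : G.dist w z = G.dist z w := SimpleGraph.dist_comm ..
      simp only [A, Matrix.of_apply, hc]
      by_cases h1 : G.dist x w = (i : ℕ) <;> by_cases h2 : G.dist z w = (i : ℕ) <;>
        simp [h1, h2]
    rw [Finset.sum_congr rfl fun w _ => this w]
    rw [Finset.sum_boole, ← hcount]
  -- the key identity
  have key : A * A * H = H * (M i * M i) := by
    rw [Matrix.mul_assoc, hMi, ← Matrix.mul_assoc, hMi, Matrix.mul_assoc]
  -- entries of M i * M i are divisible by p
  have hdivMM : ∀ a b : Fin n, (p : ℤ) ∣ (M i * M i) a b := by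
    intro a b
    obtain ⟨x, rfl⟩ := ho a
    have h1 : (M i * M i) (o x) b = (A * A * H) x b := by
      rw [key, hHmul]
    rw [h1, Matrix.mul_apply]
    refine Finset.dvd_sum fun z _ => ?_
    rw [hAA]
    exact dvd_mul_of_dvd_left (Int.natCast_dvd_natCast.2 (hdiv _)) _
  -- M i is symmetric
  have hsymm : (M i)ᵀ = M i := by
    rcases Nat.eq_zero_or_pos n with hn | hn
    · ext a b; exact absurd a.2 (by omega)
    · set j₀ : Fin n := ⟨0, hn⟩
      set s : ℕ := (Finset.univ.filter fun x => o x = j₀).card with hs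
      have hHtH : Hᵀ * H = (s : ℤ) • (1 : Matrix (Fin n) (Fin n) ℤ) := by
        ext a b
        simp only [Matrix.mul_apply, Matrix.transpose_apply, H, Matrix.of_apply,
          Matrix.smul_apply, Matrix.one_apply]
        by_cases hab : a = b
        · subst hab
          have h1 : ∀ x : V, (if o x = a then (1:ℤ) else 0) * (if o x = a then 1 else 0)
              = if o x = a then (1:ℤ) else 0 := fun x => by by_cases h : o x = a <;> simp [h]
          rw [Finset.sum_congr rfl fun x _ => h1 x, Finset.sum_boole]
          simp [hs, hsize a j₀]
        · have h1 : ∀ x : V, (if o x = a then (1:ℤ) else 0) * (if o x = b then 1 else 0) = 0 :=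
            fun x => by by_cases ha : o x = a <;> by_cases hb : o x = b <;> simp_all
          rw [Finset.sum_congr rfl fun x _ => h1 x, Finset.sum_const_zero]
          simp [hab]
      have hB : Hᵀ * A * H = (s : ℤ) • M i := by
        rw [Matrix.mul_assoc, hMi, ← Matrix.mul_assoc, hHtH, Matrix.smul_mul, Matrix.one_mul]
      have hBsymm : (Hᵀ * A * H)ᵀ = Hᵀ * A * H := by
        rw [Matrix.transpose_mul, Matrix.transpose_mul, Matrix.transpose_transpose, hAsymm,
          ← Matrix.mul_assoc]
      rw [hB] at hBsymm
      have hspos : 0 < s := by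
        obtain ⟨x0, hx0⟩ := ho j₀
        exact Finset.card_pos.2 ⟨x0, by simp [hx0]⟩
      ext a b
      have := congrFun (congrFun hBsymm a) b
      simp only [Matrix.transpose_apply, Matrix.smul_apply, smul_eq_mul] at this ⊢
      exact mul_left_cancel₀ (by exact_mod_cast hspos.ne' : (s : ℤ) ≠ 0) this
  -- the matrix identity over F
  have hMMT : ((M i).map (Int.cast : ℤ → F)) * ((M i).map (Int.cast : ℤ → F))ᵀ = 0 := by
    rw [← Matrix.transpose_map, hsymm]
    have : ((M i).map (Int.cast : ℤ → F)) * ((M i).map (Int.cast : ℤ → F))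
        = (M i * M i).map (Int.cast : ℤ → F) := by
      ext a b
      exact (congrFun (congrFun (Matrix.map_mul (f := Int.castRingHom F)) a) b).symm
    rw [this]
    ext a b
    rcases hdivMM a b with ⟨t, ht⟩
    simp only [Matrix.map_apply, Matrix.zero_apply, ht]
    push_cast
    exact (by rw [Int.cast_mul, Int.cast_natCast, CharP.cast_eq_zero F p, zero_mul] : (((p:ℤ) * t : ℤ) : F) = 0)
  refine ⟨?_, hMMT⟩
  -- self-orthogonality of the row span
  set N : Matrix (Fin n) (Fin n) F := (M i).map (Int.cast : ℤ → F) with hN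
  have hrow : ∀ a b : Fin n, N a ⬝ᵥ N b = 0 := by
    intro a b
    have := congrFun (congrFun hMMT a) b
    simpa [Matrix.mul_apply, dotProduct, Matrix.transpose_apply] using this
  have hrowspan : ∀ a : Fin n, ∀ v ∈ Submodule.span F (Set.range fun r => N r),
      N a ⬝ᵥ v = 0 := by
    intro a v hv
    induction hv using Submodule.span_induction with
    | mem x hx => obtain ⟨b, rfl⟩ := hx; exact hrow a b
    | zero => simp
    | add x y hx hy ihx ihy => rw [dotProduct_add, ihx, ihy, add_zero]
    | smul c x hx ihx => rw [dotProduct_smul, ihx, smul_zero]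
  intro u hu v hv
  induction hu using Submodule.span_induction with
  | mem x hx => obtain ⟨a, rfl⟩ := hx; exact hrowspan a v hv
  | zero => simp
  | add x y hx hy ihx ihy => rw [add_dotProduct, ihx, ihy, add_zero]
  | smul c x hx ihx => rw [smul_dotProduct, ihx, smul_zero]
end

section
/- Let Γ be a distance-regular graph with diameter d and intersection numbers p_{ij}^k, let m ≥ 2 be a positive integer, and let G be a group of automorphisms of Γ all of whose vertex orbits have the same size, with n orbits. Let H be the characteristic matrix of the orbit partition and M_i the quotient matrix of the distance-i matrix A_i with respect to this partition (so A_i H = H M_i). If there exists i ∈ {1,...,d} such that m divides p_{ii}^k for all k ∈ {0,1,...,d}, then the ℤ/mℤ-submodule of (ℤ/mℤ)^n spanned by the rows of M_i reduced modulo m is self-orthogonal; equivalently, M_i · M_iᵀ = 0 over ℤ/mℤ. -/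
open Matrix Finset

/-- Let `Γ` be a distance-regular graph of diameter `d` with intersection
numbers `p i j k`, and let a group `G` of automorphisms act on `Γ` with `n` orbits, all
of the same size.  If the integer `m ≥ 2` divides `p i i k` for all `k` (for some
`i ∈ {1, …, d}`), then the rows of the quotient matrix `M i` reduced mod `m` span a
self-orthogonal code of length `n` over `ℤ/mℤ`; equivalently `M i * (M i)ᵀ = 0`
over `ℤ/mℤ`. -/
theorem drg_quotient_matrix_spans_self_orthogonal_code_over_zmod
    {V : Type*} [Fintype V] [DecidableEq V]
    (G : SimpleGraph V) (hconn : G.Connected)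
    (d : ℕ) (hdiam : ∀ u v, G.dist u v ≤ d) (hdiam' : ∃ u v, G.dist u v = d)
    (pnum : Fin (d + 1) → Fin (d + 1) → Fin (d + 1) → ℕ)
    (hdrg : ∀ i j k : Fin (d + 1), ∀ u v : V, G.dist u v = (k : ℕ) →
      (Finset.univ.filter fun w => G.dist u w = (i : ℕ) ∧ G.dist v w = (j : ℕ)).card
        = pnum i j k)
    (m n : ℕ) (hmge : 2 ≤ m)
    -- a group of automorphisms of the graph
    (S : Subgroup (Equiv.Perm V))
    (hS : ∀ g ∈ S, ∀ u v : V, G.Adj (g u) (g v) ↔ G.Adj u v)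
    -- the orbit partition: `o x` is the index of the orbit of `x`, there are `n` orbits
    (o : V → Fin n) (ho : Function.Surjective o)
    (horb : ∀ u v : V, o u = o v ↔ ∃ g ∈ S, g u = v)
    -- all orbits have the same size
    (hsize : ∀ j₁ j₂ : Fin n, (Finset.univ.filter fun x => o x = j₁).card
        = (Finset.univ.filter fun x => o x = j₂).card)
    -- the quotient matrices of the distance matrices with respect to the orbit partition
    (M : Fin (d + 1) → Matrix (Fin n) (Fin n) ℤ)
    (hM : ∀ i : Fin (d + 1),
      (Matrix.of fun u v => if G.dist u v = (i : ℕ) then (1 : ℤ) else 0)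
          * (Matrix.of fun x j => if o x = j then (1 : ℤ) else 0)
        = (Matrix.of fun x j => if o x = j then (1 : ℤ) else 0) * M i)
    (i : Fin (d + 1)) (hi : i ≠ 0)
    (hdiv : ∀ k, m ∣ pnum i i k) :
    (∀ u ∈ Submodule.span (ZMod m)
        (Set.range fun r => ((M i).map (Int.cast : ℤ → ZMod m)) r),
     ∀ v ∈ Submodule.span (ZMod m)
        (Set.range fun r => ((M i).map (Int.cast : ℤ → ZMod m)) r),
       u ⬝ᵥ v = 0)
    ∧ ((M i).map (Int.cast : ℤ → ZMod m))
        * ((M i).map (Int.cast : ℤ → ZMod m))ᵀ = 0 := by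
  -- entry formula for M i
  have key : ∀ (u : V) (k : Fin n),
      M i (o u) k
        = ((univ.filter fun w => G.dist u w = (i : ℕ) ∧ o w = k).card : ℤ) := by
    intro u k
    have h := congrFun (congrFun (hM i) u) k
    simp only [Matrix.mul_apply, Matrix.of_apply, ite_mul, mul_ite, one_mul, mul_one,
      zero_mul, mul_zero] at h
    rw [Finset.sum_ite_eq univ (o u) (fun j => M i j k)] at h
    simp only [Finset.mem_univ, if_true] at h
    rw [← h, ← Finset.sum_boole]
    apply Finset.sum_congr rfl
    intro w _
    by_cases h1 : G.dist u w = (i : ℕ) <;> by_cases h2 : o w = k <;> simp [h1, h2]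
  -- symmetry of M i
  have sym : ∀ k l : Fin n, M i k l = M i l k := by
    intro k l
    have hcard : ∀ (k l : Fin n),
        ((univ.filter fun x => o x = k).card : ℤ) * M i k l
          = ∑ w : V, ∑ v : V,
              if o w = k ∧ G.dist w v = (i : ℕ) ∧ o v = l then 1 else 0 := by
      intro k l
      have : ∀ w : V, (∑ v : V,
          if o w = k ∧ G.dist w v = (i : ℕ) ∧ o v = l then (1:ℤ) else 0)
            = if o w = k then M i k l else 0 := by
        intro w
        by_cases hw : o w = k
        · simp only [hw, true_and, if_true]
          rw [← hw, key w l, ← Finset.sum_boole]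
        · simp [hw]
      rw [Finset.sum_congr rfl fun w _ => this w, Finset.sum_ite, Finset.sum_const_zero,
        add_zero, Finset.sum_const, nsmul_eq_mul]
    have h1 := hcard k l
    have h2 := hcard l k
    rw [Finset.sum_comm] at h2
    have heq : ((univ.filter fun x => o x = k).card : ℤ) * M i k l
        = ((univ.filter fun x => o x = l).card : ℤ) * M i l k := by
      rw [h1, h2]
      apply Finset.sum_congr rfl; intro w _
      apply Finset.sum_congr rfl; intro v _
      refine if_congr ?_ rfl rfl
      rw [SimpleGraph.dist_comm]
      tauto
    rw [hsize l k] at heq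
    have hpos : 0 < (univ.filter fun x => o x = k).card := by
      obtain ⟨x, hx⟩ := ho k
      exact Finset.card_pos.mpr ⟨x, by simp [hx]⟩
    exact mul_left_cancel₀ (by exact_mod_cast hpos.ne') heq
  -- M i * M i is divisible by m entrywise
  have hdvd : ∀ j l : Fin n, (m : ℤ) ∣ (M i * M i) j l := by
    intro j l
    obtain ⟨u, hu⟩ := ho j
    have step1 : (M i * M i) j l
        = ∑ w : V, if G.dist u w = (i : ℕ) then M i (o w) l else 0 := by
      rw [Matrix.mul_apply]
      have : ∀ k, M i j k * M i k l
          = ∑ w : V, if G.dist u w = (i : ℕ) ∧ o w = k then M i k l else 0 := by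
        intro k
        rw [← hu, key u k, Finset.sum_ite, Finset.sum_const_zero, add_zero,
          Finset.sum_const, nsmul_eq_mul]
      rw [Finset.sum_congr rfl fun k _ => this k, Finset.sum_comm]
      apply Finset.sum_congr rfl; intro w _
      by_cases h1 : G.dist u w = (i : ℕ)
      · simp only [h1, true_and, if_true]
        rw [Finset.sum_ite_eq univ (o w) (fun k => M i k l)]
        simp
      · simp [h1]
    have step2 : (M i * M i) j l
        = ∑ v : V, if o v = l then
            ((univ.filter fun w => G.dist u w = (i : ℕ) ∧ G.dist v w = (i : ℕ)).card : ℤ)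
          else 0 := by
      rw [step1]
      have : ∀ w : V, (if G.dist u w = (i : ℕ) then M i (o w) l else 0)
          = ∑ v : V, if G.dist u w = (i : ℕ) ∧ G.dist w v = (i : ℕ) ∧ o v = l
              then (1:ℤ) else 0 := by
        intro w
        by_cases h1 : G.dist u w = (i : ℕ)
        · simp only [h1, true_and, if_true]
          rw [key w l, ← Finset.sum_boole]
        · simp [h1]
      rw [Finset.sum_congr rfl fun w _ => this w, Finset.sum_comm]
      apply Finset.sum_congr rfl; intro v _
      by_cases hv : o v = l
      · simp only [hv, if_true, and_true]
        rw [← Finset.sum_boole]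
        apply Finset.sum_congr rfl; intro w _
        refine if_congr ?_ rfl rfl
        rw [SimpleGraph.dist_comm (u := v) (v := w)]
      · simp [hv]
    rw [step2]
    apply Finset.dvd_sum
    intro v _
    by_cases hv : o v = l
    · simp only [hv, if_true]
      have hk : G.dist u v = ((⟨G.dist u v, Nat.lt_succ_of_le (hdiam u v)⟩ : Fin (d+1)) : ℕ) := rfl
      rw [hdrg i i _ u v hk]
      exact_mod_cast hdiv _
    · simp [hv]
  -- now over ZMod m
  set N : Matrix (Fin n) (Fin n) (ZMod m) := (M i).map (Int.cast : ℤ → ZMod m) with hNdef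
  have hNsym : Nᵀ = N := by
    ext a b
    simp only [hNdef, Matrix.transpose_apply, Matrix.map_apply]
    rw [sym b a]
  have hsq : N * N = 0 := by
    ext a b
    have : (N * N) a b = (((M i * M i) a b : ℤ) : ZMod m) := by
      simp only [hNdef, Matrix.mul_apply, Matrix.map_apply]
      push_cast
      rfl
    rw [this]
    simp only [Matrix.zero_apply]
    exact (ZMod.intCast_zmod_eq_zero_iff_dvd _ _).mpr (hdvd a b)
  have h2 : N * Nᵀ = 0 := by rw [hNsym]; exact hsq
  refine ⟨?_, h2⟩
  have hrow : ∀ r s : Fin n, N r ⬝ᵥ N s = 0 := by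
    intro r s
    have := congrFun (congrFun h2 r) s
    simpa [Matrix.mul_apply, Matrix.transpose_apply, dotProduct] using this
  intro u hu v hv
  -- linear map in first arg, for fixed second
  have main : ∀ v ∈ Submodule.span (ZMod m) (Set.range fun r => N r),
      ∀ u ∈ Submodule.span (ZMod m) (Set.range fun r => N r), u ⬝ᵥ v = 0 := by
    intro v hv
    have hv0 : ∀ r, N r ⬝ᵥ v = 0 := by
      intro r
      induction hv using Submodule.span_induction with
      | mem x hx => obtain ⟨s, rfl⟩ := hx; exact hrow r s
      | zero => simp
      | add x y _ _ hx hy => rw [dotProduct_add, hx, hy, add_zero]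
      | smul a x _ hx => rw [dotProduct_smul, hx, smul_zero]
    intro u hu
    induction hu using Submodule.span_induction with
    | mem x hx => obtain ⟨r, rfl⟩ := hx; exact hv0 r
    | zero => simp
    | add x y _ _ hx hy => rw [add_dotProduct, hx, hy, add_zero]
    | smul a x _ hx => rw [smul_dotProduct, hx, smul_zero]
  exact main v hv u hu
end

section
/- Let A_0, A_1, ..., A_d be the adjacency matrices of a d-class association scheme on a finite set X with |X| = n elements and intersection numbers p_{ij}^k, let p be a prime and q = p^m, and let I ⊆ {0,1,...,d}. If p divides p_{xy}^k for all k ∈ {0,1,...,d} and all x, y ∈ I, then for any two elements B, C of the non-unital F_q-subalgebra of n × n matrices over F_q generated by the images of the matrices A_i, i ∈ I (entries reduced modulo p and embedded in F_q), one has B · Cᵀ = 0; in particular, the row spaces of the elements of this algebra are pairwise orthogonal subspaces of F_q^n, so their collection is a self-orthogonal subspace code. -/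
open Matrix Finset

/-- Let `A_0, …, A_d` be the adjacency matrices of a `d`-class association
scheme on a finite set `X`, `p` a prime, `q = p ^ m`, and `I ⊆ {0, …, d}`.  If
`p ∣ p x y k` for all `k` and all `x, y ∈ I`, then any two elements `B, C` of the
non-unital `F_q`-subalgebra generated by the images of the `A i`, `i ∈ I`, satisfy
`B * Cᵀ = 0`; in particular the row spaces of the elements of this algebra are pairwise
orthogonal, i.e. they form a self-orthogonal subspace code. -/
theorem scheme_algebra_row_spaces_self_orthogonal_subspace_code
    {X : Type*} [Fintype X] [DecidableEq X] (d : ℕ)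
    (p m : ℕ) [Fact p.Prime] (hm : 0 < m)
    (A : Fin (d + 1) → Matrix X X ℤ)
    (pnum : Fin (d + 1) → Fin (d + 1) → Fin (d + 1) → ℕ)
    (hsymm : ∀ i, (A i)ᵀ = A i)
    (h01 : ∀ i u v, A i u v = 0 ∨ A i u v = 1)
    (hA0 : A 0 = 1)
    (hsum : ∑ i, A i = Matrix.of fun _ _ => (1 : ℤ))
    (hmul : ∀ i j, A i * A j = ∑ k, (pnum i j k : ℤ) • A k)
    (I : Set (Fin (d + 1)))
    (hdiv : ∀ x ∈ I, ∀ y ∈ I, ∀ k, p ∣ pnum x y k) :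
    ∀ B ∈ NonUnitalAlgebra.adjoin (GaloisField p m)
        ((fun i => (A i).map (Int.cast : ℤ → GaloisField p m)) '' I),
    ∀ C ∈ NonUnitalAlgebra.adjoin (GaloisField p m)
        ((fun i => (A i).map (Int.cast : ℤ → GaloisField p m)) '' I),
      B * Cᵀ = 0 ∧
      ∀ u ∈ Submodule.span (GaloisField p m) (Set.range fun r => B r),
      ∀ v ∈ Submodule.span (GaloisField p m) (Set.range fun r => C r),
        u ⬝ᵥ v = 0 := by
  set F := GaloisField p m
  set A' : Fin (d + 1) → Matrix X X F := fun i => (A i).map (Int.cast : ℤ → F) with hA'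
  set s : Set (Matrix X X F) := A' '' I with hs
  -- products of generators vanish
  have hgen : ∀ x ∈ I, ∀ y ∈ I, A' x * A' y = 0 := by
    intro x hx y hy
    have h1 : A' x * A' y = (A x * A y).map (Int.castRingHom F) := by
      rw [Matrix.map_mul]; rfl
    rw [h1, hmul]
    have : ((∑ k, (pnum x y k : ℤ) • A k).map (Int.castRingHom F))
        = ∑ k, ((pnum x y k : ℤ) : F) • (A k).map (Int.castRingHom F) := by
      ext u v
      simp only [Matrix.map_apply, Matrix.sum_apply, Matrix.smul_apply, smul_eq_mul]
      rw [map_sum]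
      simp [_root_.map_mul, map_intCast]
    rw [this]
    apply Finset.sum_eq_zero
    intro k _
    obtain ⟨t, ht⟩ := hdiv x hx y hy k
    have : ((pnum x y k : ℤ) : F) = 0 := by
      push_cast
      rw [ht]
      push_cast
      exact_mod_cast (CharP.cast_eq_zero_iff F p (p * t)).mpr (dvd_mul_right p t)
    rw [this, zero_smul]
  set S : Submodule F (Matrix X X F) := Submodule.span F s with hS
  -- any two elements of S multiply to zero
  have hmul0 : ∀ a ∈ S, ∀ b ∈ S, a * b = 0 := by
    intro a ha b hb
    induction ha using Submodule.span_induction with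
    | mem x hx =>
      induction hb using Submodule.span_induction with
      | mem y hy =>
        obtain ⟨i, hi, rfl⟩ := hx
        obtain ⟨j, hj, rfl⟩ := hy
        exact hgen i hi j hj
      | zero => simp
      | add y z _ _ hy hz => rw [mul_add, hy, hz, add_zero]
      | smul c y _ hy => rw [mul_smul_comm, hy, smul_zero]
    | zero => simp
    | add x y _ _ hx hy => rw [add_mul, hx, hy, add_zero]
    | smul c x _ hx => rw [smul_mul_assoc, hx, smul_zero]
  -- S is a non-unital subalgebra
  let T : NonUnitalSubalgebra F (Matrix X X F) :=
    { S with
      mul_mem' := fun {a b} ha hb => by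
        rw [hmul0 a ha b hb]; exact S.zero_mem }
  have hadj : NonUnitalAlgebra.adjoin F s ≤ T :=
    NonUnitalAlgebra.adjoin_le (fun x hx => Submodule.subset_span hx)
  -- S is closed under transpose
  have htrans : ∀ a ∈ S, aᵀ ∈ S := by
    intro a ha
    induction ha using Submodule.span_induction with
    | mem x hx =>
      obtain ⟨i, hi, rfl⟩ := hx
      have : (A' i)ᵀ = A' i := by
        show ((A i).map _)ᵀ = (A i).map _
        ext u v
        simp only [Matrix.transpose_apply, Matrix.map_apply]
        congr 1
        conv_lhs => rw [← hsymm i]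
        rfl
      rw [this]
      exact Submodule.subset_span ⟨i, hi, rfl⟩
    | zero => rw [Matrix.transpose_zero]; exact S.zero_mem
    | add x y _ _ hx hy => rw [Matrix.transpose_add]; exact S.add_mem hx hy
    | smul c x _ hx => rw [Matrix.transpose_smul]; exact S.smul_mem c hx
  intro B hB C hC
  have hBS : B ∈ S := hadj hB
  have hCS : C ∈ S := hadj hC
  have hBC : B * Cᵀ = 0 := hmul0 B hBS Cᵀ (htrans C hCS)
  refine ⟨hBC, ?_⟩
  intro u hu v hv
  -- rows are orthogonal
  have hrow : ∀ r t : X, B r ⬝ᵥ C t = 0 := by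
    intro r t
    have : (B * Cᵀ) r t = 0 := by rw [hBC]; rfl
    rw [Matrix.mul_apply] at this
    simpa [dotProduct, Matrix.transpose_apply] using this
  induction hu using Submodule.span_induction with
  | mem x hx =>
    obtain ⟨r, rfl⟩ := hx
    induction hv using Submodule.span_induction with
    | mem y hy =>
      obtain ⟨t, rfl⟩ := hy
      exact hrow r t
    | zero => simp
    | add y z _ _ hy hz => rw [dotProduct_add, hy, hz, add_zero]
    | smul c y _ hy => rw [dotProduct_smul, hy, smul_zero]
  | zero => simp
  | add x y _ _ hx hy => rw [add_dotProduct, hx, hy, add_zero]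
  | smul c x _ hx => rw [smul_dotProduct, hx, smul_zero]
end

section
/- Let Π be an equitable partition, with n cells all of the same size |X|/n, of a d-class association scheme on a finite set X with intersection numbers p_{ij}^k, and let M_i denote the quotient matrices. Let p be a prime, q = p^m, and I ⊆ {0,1,...,d}, and suppose p divides p_{xy}^k for all k ∈ {0,1,...,d} and all x, y ∈ I. Then for any two elements B, C of the non-unital F_q-subalgebra of n × n matrices over F_q generated by the images of the matrices M_i, i ∈ I (entries reduced modulo p and embedded in F_q), one has B · Cᵀ = 0; hence the set of row spaces of the elements of this algebra forms a self-orthogonal subspace code in F_q^n. -/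
open Matrix Finset

/-- Let `Π` be an equitable partition, into `n` cells all of the same size
`|X| / n`, of a `d`-class association scheme, with quotient matrices `M i`.  Let `p` be a
prime, `q = p ^ m`, and `I ⊆ {0, …, d}` with `p ∣ p x y k` for all `k` and all
`x, y ∈ I`.  Then any two elements `B, C` of the non-unital `F_q`-subalgebra generated
by the images of the `M i`, `i ∈ I`, satisfy `B * Cᵀ = 0`; hence the row spaces of the
elements of this algebra form a self-orthogonal subspace code in `F_q^n`. -/
theorem quotient_algebra_row_spaces_self_orthogonal_subspace_code
    {X : Type*} [Fintype X] [DecidableEq X] (d n : ℕ)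
    (p m : ℕ) [Fact p.Prime] (hm : 0 < m)
    (A : Fin (d + 1) → Matrix X X ℤ)
    (pnum : Fin (d + 1) → Fin (d + 1) → Fin (d + 1) → ℕ)
    (hsymm : ∀ i, (A i)ᵀ = A i)
    (h01 : ∀ i u v, A i u v = 0 ∨ A i u v = 1)
    (hA0 : A 0 = 1)
    (hsum : ∑ i, A i = Matrix.of fun _ _ => (1 : ℤ))
    (hmul : ∀ i j, A i * A j = ∑ k, (pnum i j k : ℤ) • A k)
    -- the partition into `n` nonempty cells, all of size `|X| / n`
    (c : X → Fin n) (hc : Function.Surjective c)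
    (hsize : ∀ j, (Finset.univ.filter fun x => c x = j).card = Fintype.card X / n)
    -- the partition is equitable, with quotient matrices `M i`
    (M : Fin (d + 1) → Matrix (Fin n) (Fin n) ℤ)
    (hM : ∀ i, A i * (Matrix.of fun x j => if c x = j then (1 : ℤ) else 0)
        = (Matrix.of fun x j => if c x = j then (1 : ℤ) else 0) * M i)
    (I : Set (Fin (d + 1)))
    (hdiv : ∀ x ∈ I, ∀ y ∈ I, ∀ k, p ∣ pnum x y k) :
    ∀ B ∈ NonUnitalAlgebra.adjoin (GaloisField p m)
        ((fun i => (M i).map (Int.cast : ℤ → GaloisField p m)) '' I),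
    ∀ C ∈ NonUnitalAlgebra.adjoin (GaloisField p m)
        ((fun i => (M i).map (Int.cast : ℤ → GaloisField p m)) '' I),
      B * Cᵀ = 0 ∧
      ∀ u ∈ Submodule.span (GaloisField p m) (Set.range fun r => B r),
      ∀ v ∈ Submodule.span (GaloisField p m) (Set.range fun r => C r),
        u ⬝ᵥ v = 0 := by
  intro B hB C hC
  set N : Fin (d + 1) → Matrix (Fin n) (Fin n) (GaloisField p m) :=
    fun i => (M i).map (Int.cast : ℤ → GaloisField p m) with hNdef
  set S : Set (Matrix (Fin n) (Fin n) (GaloisField p m)) := N '' I with hSdef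
  rcases Nat.eq_zero_or_pos n with hn | hn
  · subst hn
    refine ⟨by ext i j; exact i.elim0, ?_⟩
    intro u _ v _
    simp [dotProduct]
  -- main case : n > 0
  set s : ℕ := Fintype.card X / n with hsdef
  have hs : 0 < s := by
    obtain ⟨x, hx⟩ := hc ⟨0, hn⟩
    have h1 : 0 < (Finset.univ.filter fun y => c y = (⟨0, hn⟩ : Fin n)).card :=
      Finset.card_pos.mpr ⟨x, by simp [hx]⟩
    rwa [hsize] at h1
  have hz : (s : ℤ) ≠ 0 := by exact_mod_cast hs.ne'
  set H : Matrix X (Fin n) ℤ := Matrix.of fun x j => if c x = j then (1 : ℤ) else 0 with hHdef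
  -- HᵀH = s • 1
  have hHtH : Hᵀ * H = (s : ℤ) • (1 : Matrix (Fin n) (Fin n) ℤ) := by
    ext j j'
    simp only [Matrix.mul_apply, Matrix.transpose_apply, hHdef, Matrix.of_apply,
      Matrix.smul_apply, Matrix.one_apply, smul_eq_mul]
    by_cases h : j = j'
    · subst h
      have he : ∀ x : X, (if c x = j then (1 : ℤ) else 0) * (if c x = j then 1 else 0)
          = if c x = j then 1 else 0 := fun x => by split_ifs <;> ring
      rw [Finset.sum_congr rfl fun x _ => he x, Finset.sum_boole]
      simp [hsize j]
    · have he : ∀ x : X, (if c x = j then (1 : ℤ) else 0) * (if c x = j' then 1 else 0)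
          = 0 := by
        intro x
        rcases eq_or_ne (c x) j with h1 | h1
        · rw [if_pos h1, if_neg (fun h2 => h (h1 ▸ h2)), mul_zero]
        · rw [if_neg h1, zero_mul]
      rw [Finset.sum_congr rfl fun x _ => he x]
      simp [h]
  -- HᵀA_iH = s • M i
  have h3 : ∀ i, Hᵀ * (A i * H) = (s : ℤ) • M i := by
    intro i
    rw [hM i, ← Matrix.mul_assoc, hHtH, Matrix.smul_mul, one_mul]
  -- each M i is symmetric
  have hsymM : ∀ i, (M i)ᵀ = M i := by
    intro i
    have h2 : ((s : ℤ) • M i)ᵀ = (s : ℤ) • M i := by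
      calc ((s : ℤ) • M i)ᵀ = (Hᵀ * (A i * H))ᵀ := by rw [h3]
        _ = Hᵀ * (A i * H) := by
            rw [Matrix.transpose_mul, Matrix.transpose_mul, Matrix.transpose_transpose,
              hsymm, Matrix.mul_assoc]
        _ = (s : ℤ) • M i := h3 i
    rw [Matrix.transpose_smul] at h2
    exact smul_right_injective _ hz h2
  -- the quotient matrices satisfy the intersection-number relations
  have hMmul : ∀ x y, M x * M y = ∑ k, (pnum x y k : ℤ) • M k := by
    intro x y
    have e1 : Hᵀ * ((A x * A y) * H) = (s : ℤ) • (M x * M y) := by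
      rw [Matrix.mul_assoc (A x) (A y) H, hM y, ← Matrix.mul_assoc (A x) H (M y), hM x,
        Matrix.mul_assoc H (M x) (M y), ← Matrix.mul_assoc, hHtH, Matrix.smul_mul, one_mul]
    have e2 : Hᵀ * ((A x * A y) * H) = (s : ℤ) • ∑ k, (pnum x y k : ℤ) • M k := by
      rw [hmul, Matrix.sum_mul, Matrix.mul_sum]
      simp only [Matrix.smul_mul, Matrix.mul_smul, h3]
      rw [Finset.smul_sum]
      exact Finset.sum_congr rfl fun k _ => smul_comm _ _ _
    exact smul_right_injective _ hz (e1.symm.trans e2)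
  -- products of generator images vanish
  have hNmul : ∀ x ∈ I, ∀ y ∈ I, N x * N y = 0 := by
    intro x hx y hy
    have hcast : N x * N y = (M x * M y).map (Int.cast : ℤ → GaloisField p m) := by
      ext a b
      simp only [hNdef, Matrix.mul_apply, Matrix.map_apply]
      push_cast
      rfl
    rw [hcast, hMmul x y]
    ext a b
    simp only [Matrix.map_apply, Matrix.sum_apply, Matrix.smul_apply, smul_eq_mul,
      Matrix.zero_apply]
    push_cast
    apply Finset.sum_eq_zero
    intro k _
    obtain ⟨t, ht⟩ := hdiv x hx y hy k
    have hp : (p : GaloisField p m) = 0 := CharP.cast_eq_zero (GaloisField p m) p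
    rw [ht]
    push_cast
    rw [hp, zero_mul, zero_mul]
  have hNsym : ∀ i, (N i)ᵀ = N i := by
    intro i
    ext a b
    simp only [hNdef, Matrix.transpose_apply, Matrix.map_apply]
    rw [← Matrix.transpose_apply (M i), hsymM i]
  -- products of any two elements of the span of the generators vanish
  have hspanmul : ∀ B' ∈ Submodule.span (GaloisField p m) S, ∀ C' ∈ Submodule.span (GaloisField p m) S, B' * C' = 0 := by
    intro B' hB' C' hC'
    induction hB' using Submodule.span_induction with
    | mem x hx =>
      induction hC' using Submodule.span_induction with
      | mem y hy =>
        obtain ⟨i, hi, rfl⟩ := hx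
        obtain ⟨j, hj, rfl⟩ := hy
        exact hNmul i hi j hj
      | zero => rw [mul_zero]
      | add a b _ _ ha hb => rw [mul_add, ha, hb, add_zero]
      | smul r a _ ha => rw [mul_smul_comm, ha, smul_zero]
    | zero => rw [zero_mul]
    | add a b _ _ ha hb => rw [add_mul, ha, hb, add_zero]
    | smul r a _ ha => rw [smul_mul_assoc, ha, smul_zero]
  -- every element of the adjoin is in the span and symmetric
  have hadj : ∀ B' ∈ NonUnitalAlgebra.adjoin (GaloisField p m) S, B' ∈ Submodule.span (GaloisField p m) S ∧ B'ᵀ = B' := by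
    intro B' hB'
    induction hB' using NonUnitalAlgebra.adjoin_induction with
    | mem x hx =>
      refine ⟨Submodule.subset_span hx, ?_⟩
      obtain ⟨i, hi, rfl⟩ := hx
      exact hNsym i
    | add x y hx hy ihx ihy =>
      exact ⟨Submodule.add_mem _ ihx.1 ihy.1, by rw [Matrix.transpose_add, ihx.2, ihy.2]⟩
    | zero => exact ⟨Submodule.zero_mem _, Matrix.transpose_zero⟩
    | mul x y hx hy ihx ihy =>
      have h0 : x * y = 0 := hspanmul x ihx.1 y ihy.1
      exact ⟨h0 ▸ Submodule.zero_mem _, by rw [h0, Matrix.transpose_zero]⟩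
    | smul r x hx ihx =>
      exact ⟨Submodule.smul_mem _ _ ihx.1, by rw [Matrix.transpose_smul, ihx.2]⟩
  obtain ⟨hB1, hB2⟩ := hadj B hB
  obtain ⟨hC1, hC2⟩ := hadj C hC
  have hmain : B * Cᵀ = 0 := by rw [hC2]; exact hspanmul B hB1 C hC1
  refine ⟨hmain, ?_⟩
  have hrow : ∀ r r', B r ⬝ᵥ C r' = 0 := by
    intro r r'
    have h0 := congrFun (congrFun hmain r) r'
    simpa [Matrix.mul_apply, dotProduct, Matrix.transpose_apply] using h0
  intro u hu v hv
  induction hu using Submodule.span_induction with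
  | mem u' hu' =>
    induction hv using Submodule.span_induction with
    | mem v' hv' =>
      obtain ⟨r, rfl⟩ := hu'
      obtain ⟨r', rfl⟩ := hv'
      exact hrow r r'
    | zero => rw [dotProduct_zero]
    | add a b _ _ ha hb => rw [dotProduct_add, ha, hb, add_zero]
    | smul a x _ hx => rw [dotProduct_smul, hx, smul_zero]
  | zero => rw [zero_dotProduct]
  | add a b _ _ ha hb => rw [add_dotProduct, ha, hb, add_zero]
  | smul a x _ hx => rw [smul_dotProduct, hx, smul_zero]
end

section
/- Let Γ be a distance-regular graph with diameter d and intersection numbers p_{ij}^k, and let G be a group of automorphisms of Γ all of whose vertex orbits have the same size, with n orbits; let M_i be the quotient matrix of the distance-i matrix A_i with respect to the orbit partition (so A_i H = H M_i for the characteristic matrix H of the orbit partition). Let p be a prime, q = p^m, and I ⊆ {0,1,...,d}, and suppose p divides p_{xy}^k for all k ∈ {0,1,...,d} and all x, y ∈ I. Then for any two elements B, C of the non-unital F_q-subalgebra of n × n matrices over F_q generated by the images of the matrices M_i, i ∈ I, one has B · Cᵀ = 0; hence the set of row spaces of the elements of this algebra forms a self-orthogonal subspace code in F_q^n. -/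
open Matrix Finset

/-- Let `Γ` be a distance-regular graph of diameter `d` with intersection
numbers `p i j k`, and let a group of automorphisms act on `Γ` with `n` orbits, all of
the same size, with quotient matrices `M i` of the distance matrices.  Let `p` be a
prime, `q = p ^ m`, and `I ⊆ {0, …, d}` with `p ∣ p x y k` for all `k` and all
`x, y ∈ I`.  Then any two elements `B, C` of the non-unital `F_q`-subalgebra generated
by the images of the `M i`, `i ∈ I`, satisfy `B * Cᵀ = 0`; hence the row spaces of the
elements of this algebra form a self-orthogonal subspace code in `F_q^n`. -/
theorem drg_quotient_algebra_row_spaces_self_orthogonal_subspace_code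
    {V : Type*} [Fintype V] [DecidableEq V]
    (G : SimpleGraph V) (hconn : G.Connected)
    (d : ℕ) (hdiam : ∀ u v, G.dist u v ≤ d) (hdiam' : ∃ u v, G.dist u v = d)
    (pnum : Fin (d + 1) → Fin (d + 1) → Fin (d + 1) → ℕ)
    (hdrg : ∀ i j k : Fin (d + 1), ∀ u v : V, G.dist u v = (k : ℕ) →
      (Finset.univ.filter fun w => G.dist u w = (i : ℕ) ∧ G.dist v w = (j : ℕ)).card
        = pnum i j k)
    (p m n : ℕ) [Fact p.Prime] (hm : 0 < m)
    -- a group of automorphisms of the graph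
    (S : Subgroup (Equiv.Perm V))
    (hS : ∀ g ∈ S, ∀ u v : V, G.Adj (g u) (g v) ↔ G.Adj u v)
    -- the orbit partition: `o x` is the index of the orbit of `x`, there are `n` orbits
    (o : V → Fin n) (ho : Function.Surjective o)
    (horb : ∀ u v : V, o u = o v ↔ ∃ g ∈ S, g u = v)
    -- all orbits have the same size
    (hsize : ∀ j₁ j₂ : Fin n, (Finset.univ.filter fun x => o x = j₁).card
        = (Finset.univ.filter fun x => o x = j₂).card)
    -- the quotient matrices of the distance matrices with respect to the orbit partition
    (M : Fin (d + 1) → Matrix (Fin n) (Fin n) ℤ)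
    (hM : ∀ i : Fin (d + 1),
      (Matrix.of fun u v => if G.dist u v = (i : ℕ) then (1 : ℤ) else 0)
          * (Matrix.of fun x j => if o x = j then (1 : ℤ) else 0)
        = (Matrix.of fun x j => if o x = j then (1 : ℤ) else 0) * M i)
    (I : Set (Fin (d + 1)))
    (hdiv : ∀ x ∈ I, ∀ y ∈ I, ∀ k, p ∣ pnum x y k) :
    ∀ B ∈ NonUnitalAlgebra.adjoin (GaloisField p m)
        ((fun i => (M i).map (Int.cast : ℤ → GaloisField p m)) '' I),
    ∀ C ∈ NonUnitalAlgebra.adjoin (GaloisField p m)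
        ((fun i => (M i).map (Int.cast : ℤ → GaloisField p m)) '' I),
      B * Cᵀ = 0 ∧
      ∀ u ∈ Submodule.span (GaloisField p m) (Set.range fun r => B r),
      ∀ v ∈ Submodule.span (GaloisField p m) (Set.range fun r => C r),
        u ⬝ᵥ v = 0 := by
  classical
  set A : Fin (d + 1) → Matrix V V ℤ :=
    fun i => Matrix.of fun u v => if G.dist u v = (i : ℕ) then (1 : ℤ) else 0 with hAdef
  set H : Matrix V (Fin n) ℤ :=
    Matrix.of fun x j => if o x = j then (1 : ℤ) else 0 with hHdef
  have hM' : ∀ i, A i * H = H * M i := fun i => hM i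
  set s : Fin n → ℤ := fun j => ((Finset.univ.filter fun x => o x = j).card : ℤ) with hsdef
  have hs0 : ∀ j, s j ≠ 0 := by
    intro j
    obtain ⟨x, hx⟩ := ho j
    have hpos : 0 < (Finset.univ.filter fun x => o x = j).card :=
      Finset.card_pos.2 ⟨x, by simp [hx]⟩
    simp only [hsdef]
    exact_mod_cast hpos.ne'
  have hseq : ∀ j₁ j₂, s j₁ = s j₂ := fun j₁ j₂ => by
    simp only [hsdef]; exact_mod_cast hsize j₁ j₂
  -- Hᵀ H = diagonal s
  have hHtH : Hᵀ * H = Matrix.diagonal s := by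
    ext j₁ j₂
    rw [Matrix.mul_apply]
    by_cases h : j₁ = j₂
    · subst h
      rw [Matrix.diagonal_apply_eq]
      simp only [hHdef, Matrix.transpose_apply, Matrix.of_apply, hsdef]
      rw [Finset.card_filter]
      push_cast
      refine Finset.sum_congr rfl fun x _ => ?_
      by_cases hx : o x = j₁ <;> simp [hx]
    · rw [Matrix.diagonal_apply_ne _ h]
      refine Finset.sum_eq_zero fun x _ => ?_
      simp only [hHdef, Matrix.transpose_apply, Matrix.of_apply]
      by_cases hx : o x = j₁
      · simp [hx, h]
      · simp [hx]
  -- distance matrices are symmetric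
  have hAsym : ∀ i, (A i)ᵀ = A i := by
    intro i
    ext u v
    have hdc : G.dist v u = G.dist u v := SimpleGraph.dist_comm
    simp only [hAdef, Matrix.transpose_apply, Matrix.of_apply, hdc]
  -- product formula for distance matrices
  have hAA : ∀ i j : Fin (d + 1), A i * A j = ∑ k : Fin (d + 1), (pnum i j k : ℤ) • A k := by
    intro i j
    ext u v
    have hk : G.dist u v < d + 1 := Nat.lt_succ_of_le (hdiam u v)
    have hcard := hdrg i j ⟨G.dist u v, hk⟩ u v rfl
    have hL : (A i * A j) u v
        = ((Finset.univ.filter fun w =>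
            G.dist u w = (i : ℕ) ∧ G.dist v w = (j : ℕ)).card : ℤ) := by
      rw [Matrix.mul_apply, Finset.card_filter]
      push_cast
      refine Finset.sum_congr rfl fun w _ => ?_
      have hdc : G.dist w v = G.dist v w := SimpleGraph.dist_comm
      simp only [hAdef, Matrix.of_apply, hdc]
      by_cases h1 : G.dist u w = (i : ℕ) <;> by_cases h2 : G.dist v w = (j : ℕ) <;>
        simp [h1, h2]
    rw [hL, hcard]
    symm
    rw [Matrix.sum_apply]
    rw [Finset.sum_eq_single (⟨G.dist u v, hk⟩ : Fin (d + 1))]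
    · simp [hAdef, Matrix.smul_apply]
    · intro k _ hne
      simp only [hAdef, Matrix.smul_apply, Matrix.of_apply]
      rw [if_neg, smul_zero]
      intro hd
      exact hne (Fin.ext hd.symm)
    · intro hmem
      exact absurd (Finset.mem_univ _) hmem
  -- cancellation of the diagonal matrix
  have hcancel : ∀ X Y : Matrix (Fin n) (Fin n) ℤ,
      Matrix.diagonal s * X = Matrix.diagonal s * Y → X = Y := by
    intro X Y hXY
    ext a b
    have h2 : (Matrix.diagonal s * X) a b = (Matrix.diagonal s * Y) a b := by rw [hXY]
    rw [Matrix.diagonal_mul, Matrix.diagonal_mul] at h2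
    exact mul_left_cancel₀ (hs0 a) h2
  have hsand : ∀ i, Hᵀ * A i * H = Matrix.diagonal s * M i := by
    intro i
    rw [Matrix.mul_assoc, hM' i, ← Matrix.mul_assoc, hHtH]
  -- the quotient matrices are symmetric
  have hMsym : ∀ i, (M i)ᵀ = M i := by
    intro i
    have h2 : (Matrix.diagonal s * M i)ᵀ = Matrix.diagonal s * M i := by
      rw [← hsand i, Matrix.transpose_mul, Matrix.transpose_mul, Matrix.transpose_transpose,
        hAsym i, ← Matrix.mul_assoc]
    ext a b
    have h4 : (Matrix.diagonal s * M i)ᵀ a b = (Matrix.diagonal s * M i) a b := by rw [h2]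
    rw [Matrix.transpose_apply, Matrix.diagonal_mul, Matrix.diagonal_mul] at h4
    rw [Matrix.transpose_apply]
    have h5 : s b * M i b a = s b * M i a b := by rw [h4, hseq a b]
    exact mul_left_cancel₀ (hs0 b) h5
  -- product formula for quotient matrices
  have hMM : ∀ i j, M i * M j = ∑ k, ((pnum i j k : ℤ)) • M k := by
    intro i j
    apply hcancel
    have e3 : H * (∑ k, (pnum i j k : ℤ) • M k) = (∑ k, (pnum i j k : ℤ) • A k) * H := by
      rw [Matrix.mul_sum, Matrix.sum_mul]
      refine Finset.sum_congr rfl fun k _ => ?_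
      rw [Matrix.mul_smul, Matrix.smul_mul, hM' k]
    calc Matrix.diagonal s * (M i * M j)
        = Hᵀ * H * (M i * M j) := by rw [hHtH]
      _ = Hᵀ * (H * M i * M j) := by
          rw [Matrix.mul_assoc, ← Matrix.mul_assoc H (M i) (M j)]
      _ = Hᵀ * (A i * H * M j) := by rw [hM' i]
      _ = Hᵀ * (A i * (A j * H)) := by rw [Matrix.mul_assoc (A i) H (M j), hM' j]
      _ = Hᵀ * (A i * A j * H) := by rw [← Matrix.mul_assoc (A i) (A j) H]
      _ = Hᵀ * ((∑ k, (pnum i j k : ℤ) • A k) * H) := by rw [hAA i j]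
      _ = Hᵀ * (H * (∑ k, (pnum i j k : ℤ) • M k)) := by rw [← e3]
      _ = Hᵀ * H * (∑ k, (pnum i j k : ℤ) • M k) := by rw [Matrix.mul_assoc]
      _ = Matrix.diagonal s * (∑ k, (pnum i j k : ℤ) • M k) := by rw [hHtH]
  -- now pass to the finite field
  set N : Fin (d + 1) → Matrix (Fin n) (Fin n) (GaloisField p m) :=
    fun i => (M i).map (Int.cast : ℤ → GaloisField p m) with hNdef
  have hcast0 : ∀ x ∈ I, ∀ y ∈ I, ∀ k, ((pnum x y k : ℕ) : GaloisField p m) = 0 := by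
    intro x hx y hy k
    exact (CharP.cast_eq_zero_iff (GaloisField p m) p _).2 (hdiv x hx y hy k)
  have hNmul : ∀ i j, N i * N j = (M i * M j).map (Int.cast : ℤ → GaloisField p m) := by
    intro i j
    show (M i).map _ * (M j).map _ = _
    ext a b
    simp only [Matrix.mul_apply, Matrix.map_apply]
    push_cast
    rfl
  have hNN : ∀ x ∈ I, ∀ y ∈ I, N x * N y = 0 := by
    intro x hx y hy
    rw [hNmul, hMM x y]
    ext a b
    simp only [Matrix.map_apply, Matrix.sum_apply, Matrix.smul_apply, smul_eq_mul,
      Matrix.zero_apply]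
    push_cast
    refine Finset.sum_eq_zero fun k _ => ?_
    rw [hcast0 x hx y hy k, zero_mul]

  have hNsym : ∀ i, (N i)ᵀ = N i := by
    intro i
    show ((M i).map _)ᵀ = (M i).map _
    rw [← Matrix.transpose_map, hMsym i]
  -- products of elements of the span of the generators vanish
  have hmul0 : ∀ x ∈ Submodule.span (GaloisField p m) (N '' I),
      ∀ y ∈ Submodule.span (GaloisField p m) (N '' I), x * y = 0 := by
    intro x hx y hy
    induction hx, hy using Submodule.span_induction₂ with
    | mem_mem a b ha hb =>
        obtain ⟨i, hi, rfl⟩ := ha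
        obtain ⟨j, hj, rfl⟩ := hb
        exact hNN i hi j hj
    | zero_left b hb => exact zero_mul b
    | zero_right a ha => exact mul_zero a
    | add_left x y z _ _ _ h1 h2 => rw [add_mul, h1, h2, add_zero]
    | add_right x y z _ _ _ h1 h2 => rw [mul_add, h1, h2, add_zero]
    | smul_left r x y _ _ h => rw [smul_mul_assoc, h, smul_zero]
    | smul_right r x y _ _ h => rw [mul_smul_comm, h, smul_zero]
  -- the adjoin is contained in the span
  have hadj : ∀ B ∈ NonUnitalAlgebra.adjoin (GaloisField p m) (N '' I),
      B ∈ Submodule.span (GaloisField p m) (N '' I) := by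
    intro B hB
    induction hB using NonUnitalAlgebra.adjoin_induction with
    | mem x hx => exact Submodule.subset_span hx
    | add x y _ _ hx hy => exact Submodule.add_mem _ hx hy
    | zero => exact Submodule.zero_mem _
    | mul x y _ _ hx hy =>
        rw [hmul0 x hx y hy]
        exact Submodule.zero_mem _
    | smul r x _ hx => exact Submodule.smul_mem _ _ hx
  -- the span is closed under transposition
  have hTspan : ∀ C ∈ Submodule.span (GaloisField p m) (N '' I),
      Cᵀ ∈ Submodule.span (GaloisField p m) (N '' I) := by
    intro C hC
    induction hC using Submodule.span_induction with
    | mem x hx =>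
        obtain ⟨i, hi, rfl⟩ := hx
        rw [hNsym i]
        exact Submodule.subset_span ⟨i, hi, rfl⟩
    | zero => rw [Matrix.transpose_zero]; exact Submodule.zero_mem _
    | add x y _ _ h1 h2 => rw [Matrix.transpose_add]; exact Submodule.add_mem _ h1 h2
    | smul a x _ h => rw [Matrix.transpose_smul]; exact Submodule.smul_mem _ _ h
  -- conclusion
  intro B hB C hC
  have hBC0 : B * Cᵀ = 0 := hmul0 B (hadj B hB) Cᵀ (hTspan C (hadj C hC))
  refine ⟨hBC0, ?_⟩
  have hbase : ∀ r s', B r ⬝ᵥ C s' = 0 := by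
    intro r s'
    have h0 : (B * Cᵀ) r s' = 0 := by rw [hBC0]; rfl
    rw [Matrix.mul_apply] at h0
    simpa [Matrix.transpose_apply, dotProduct] using h0
  have hstep1 : ∀ u ∈ Submodule.span (GaloisField p m) (Set.range fun r => B r),
      ∀ s', u ⬝ᵥ C s' = 0 := by
    intro u hu
    induction hu using Submodule.span_induction with
    | mem x hx =>
        obtain ⟨r, rfl⟩ := hx
        exact fun s' => hbase r s'
    | zero => intro s'; simp
    | add x y _ _ h1 h2 => intro s'; rw [add_dotProduct, h1 s', h2 s', add_zero]
    | smul a x _ h => intro s'; rw [smul_dotProduct, h s', smul_zero]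
  intro u hu v hv
  induction hv using Submodule.span_induction with
  | mem x hx =>
      obtain ⟨s', rfl⟩ := hx
      exact hstep1 u hu s'
  | zero => simp
  | add x y _ _ h1 h2 => rw [dotProduct_add, h1, h2, add_zero]
  | smul a x _ h => rw [dotProduct_smul, h, smul_zero]
end
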